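/- Let q_0 ≠ 1 be a primitive l-th root of unity, let p be a positive integer, and let a_1, ..., a_p be integers with a_1 > 0 and a_1 + ... + a_p = n where l | n. Then the element A = ([n]/[a_1]) · F_q(a_1, ..., a_p) of ℂ(q) is regular at q = q_0, and its value at q_0 is 0 if some a_i is not divisible by l, and equals (n'/a'_1) · ∏_{i=1}^{p-1} C(a'_i + a'_{i+1} - 1, a'_{i+1}) if all a_i = l·a'_i are divisible by l, where n = l·n'. -/

import Mathlib

noncomputable section

/-- The `q`-integer `[m] = (q^m - 1)/(q - 1)` in `ℂ(q)`, allowing integer `m`. -/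
def qintZ (m : ℤ) : RatFunc ℂ := (RatFunc.X ^ m - 1) / (RatFunc.X - 1)

/-- The `q`-factorial `[n]!`. -/
def qfactF (n : ℕ) : RatFunc ℂ := ∏ k ∈ Finset.range n, qintZ (k + 1)

/-- The Gaussian binomial coefficient for integer arguments:
`qbinom(n, p) = 1` if `p = 0`, `0` if `p < 0` or `p > max(0, n)`, and
`[n]!/([p]! [n-p]!)` if `0 ≤ p ≤ n`. -/
def qbinomZ (n p : ℤ) : RatFunc ℂ :=
  if p = 0 then 1
  else if p < 0 ∨ p > max 0 n then 0
  else qfactF n.toNat / (qfactF p.toNat * qfactF (n - p).toNat)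

/-- `F_q(a_1, …, a_p) = ∏_{i=1}^{p-1} qbinom(a_i + a_{i+1} - 1, a_{i+1})`
(`a i` denotes `a_{i+1}`: indices start at `0`). -/
def Fq (p : ℕ) (a : ℕ → ℤ) : RatFunc ℂ :=
  ∏ i ∈ Finset.range (p - 1), qbinomZ (a i + a (i + 1) - 1) (a (i + 1))

/-- The ordinary binomial coefficient with the same conventions on integer arguments:
`C(n, p) = 1` if `p = 0`, `0` if `p < 0` or `p > max(0, n)`, and the usual binomial
coefficient if `0 ≤ p ≤ n`. -/
def binomZ (n p : ℤ) : ℂ :=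
  if p = 0 then 1
  else if p < 0 ∨ p > max 0 n then 0
  else (Nat.choose n.toNat p.toNat : ℂ)

end


noncomputable section Aux
open Polynomial

/-- The linear factor `X - q₀` in `ℂ(q)`. -/
def tQ (q₀ : ℂ) : RatFunc ℂ := RatFunc.X - RatFunc.C q₀

theorem tQ_eq (q₀ : ℂ) : tQ q₀ = algebraMap ℂ[X] (RatFunc ℂ) (X - C q₀) := by
  rw [tQ, map_sub, RatFunc.algebraMap_X, RatFunc.algebraMap_C]

theorem tQ_ne_zero (q₀ : ℂ) : tQ q₀ ≠ 0 := by
  rw [tQ_eq]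
  exact RatFunc.algebraMap_ne_zero (X_sub_C_ne_zero q₀)

/-- `f` has order of vanishing `d` at `q₀` with (normalized) leading value `v ≠ 0`. -/
def VOrd (q₀ : ℂ) (f : RatFunc ℂ) (d : ℤ) (v : ℂ) : Prop :=
  v ≠ 0 ∧ ∃ P Q : ℂ[X], Q.eval q₀ ≠ 0 ∧ P.eval q₀ = v * Q.eval q₀ ∧
    algebraMap ℂ[X] (RatFunc ℂ) Q * f = (tQ q₀) ^ d * algebraMap ℂ[X] (RatFunc ℂ) P

theorem VOrd.one (q₀ : ℂ) : VOrd q₀ 1 0 1 :=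
  ⟨one_ne_zero, 1, 1, by simp, by simp, by simp⟩

theorem VOrd.mul {q₀ : ℂ} {f g : RatFunc ℂ} {d e : ℤ} {v w : ℂ}
    (hf : VOrd q₀ f d v) (hg : VOrd q₀ g e w) : VOrd q₀ (f * g) (d + e) (v * w) := by
  obtain ⟨hv, P, Q, hQ, hP, hfe⟩ := hf
  obtain ⟨hw, P', Q', hQ', hP', hge⟩ := hg
  refine ⟨mul_ne_zero hv hw, P * P', Q * Q', by simp [mul_ne_zero hQ hQ'],
    by simp only [eval_mul, hP, hP']; ring, ?_⟩
  rw [map_mul, map_mul, zpow_add₀ (tQ_ne_zero q₀)]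
  calc algebraMap ℂ[X] (RatFunc ℂ) Q * algebraMap ℂ[X] (RatFunc ℂ) Q' * (f * g)
      = (algebraMap ℂ[X] (RatFunc ℂ) Q * f) * (algebraMap ℂ[X] (RatFunc ℂ) Q' * g) := by ring
    _ = _ := by rw [hfe, hge]; ring

theorem VOrd.div {q₀ : ℂ} {f g : RatFunc ℂ} {d e : ℤ} {v w : ℂ}
    (hf : VOrd q₀ f d v) (hg : VOrd q₀ g e w) : VOrd q₀ (f / g) (d - e) (v / w) := by
  obtain ⟨hv, P, Q, hQ, hP, hfe⟩ := hf
  obtain ⟨hw, P', Q', hQ', hP', hge⟩ := hg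
  have hP'0 : P'.eval q₀ ≠ 0 := by rw [hP']; exact mul_ne_zero hw hQ'
  have hP'ne : algebraMap ℂ[X] (RatFunc ℂ) P' ≠ 0 :=
    RatFunc.algebraMap_ne_zero (fun h0 => hP'0 (by simp [h0]))
  have hQne : algebraMap ℂ[X] (RatFunc ℂ) Q ≠ 0 :=
    RatFunc.algebraMap_ne_zero (fun h0 => hQ (by simp [h0]))
  have hQ'ne : algebraMap ℂ[X] (RatFunc ℂ) Q' ≠ 0 :=
    RatFunc.algebraMap_ne_zero (fun h0 => hQ' (by simp [h0]))
  have hgne : g ≠ 0 := by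
    intro h0
    rw [h0, mul_zero] at hge
    exact (mul_ne_zero (zpow_ne_zero _ (tQ_ne_zero q₀)) hP'ne) hge.symm
  refine ⟨div_ne_zero hv hw, P * Q', Q * P', by simp [mul_ne_zero hQ hP'0], ?_, ?_⟩
  · simp only [eval_mul, hP, hP']
    field_simp
  · have hf2 : f = (tQ q₀) ^ d * algebraMap ℂ[X] (RatFunc ℂ) P / algebraMap ℂ[X] (RatFunc ℂ) Q := by
      rw [eq_div_iff hQne]; linear_combination hfe
    have hg2 : g = (tQ q₀) ^ e * algebraMap ℂ[X] (RatFunc ℂ) P' / algebraMap ℂ[X] (RatFunc ℂ) Q' := by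
      rw [eq_div_iff hQ'ne]; linear_combination hge
    rw [map_mul, map_mul, zpow_sub₀ (tQ_ne_zero q₀), hf2, hg2]
    have h1 := tQ_ne_zero q₀
    have h2 : (tQ q₀) ^ d ≠ 0 := zpow_ne_zero _ h1
    have h3 : (tQ q₀) ^ e ≠ 0 := zpow_ne_zero _ h1
    field_simp

theorem VOrd.prod {q₀ : ℂ} {s : Finset ℕ} {f : ℕ → RatFunc ℂ} {d : ℕ → ℤ} {v : ℕ → ℂ}
    (h : ∀ i ∈ s, VOrd q₀ (f i) (d i) (v i)) :
    VOrd q₀ (∏ i ∈ s, f i) (∑ i ∈ s, d i) (∏ i ∈ s, v i) := by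
  classical
  induction s using Finset.cons_induction with
  | empty => simpa using VOrd.one q₀
  | cons i s hi ih =>
    rw [Finset.prod_cons, Finset.sum_cons, Finset.prod_cons]
    exact (h i (Finset.mem_cons_self i s)).mul (ih fun j hj => h j (Finset.mem_cons_of_mem hj))

theorem evalHelper (q₀ : ℂ) (f : RatFunc ℂ) (P Q : ℂ[X]) (hQ : Q.eval q₀ ≠ 0)
    (h : algebraMap ℂ[X] (RatFunc ℂ) Q * f = algebraMap ℂ[X] (RatFunc ℂ) P) :
    f.denom.eval q₀ ≠ 0 ∧ RatFunc.eval (RingHom.id ℂ) q₀ f = P.eval q₀ / Q.eval q₀ := by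
  have hQ0 : Q ≠ 0 := fun h0 => hQ (by simp [h0])
  have hf : f = algebraMap ℂ[X] (RatFunc ℂ) P / algebraMap ℂ[X] (RatFunc ℂ) Q := by
    field_simp [RatFunc.algebraMap_ne_zero hQ0] at h ⊢
    linear_combination h
  have hdvd : f.denom ∣ Q := (RatFunc.denom_dvd hQ0).mpr ⟨P, hf⟩
  have hden : f.denom.eval q₀ ≠ 0 := fun h0 => hQ (by
    obtain ⟨c, hc⟩ := hdvd
    rw [hc, Polynomial.eval_mul, h0, zero_mul])
  refine ⟨hden, ?_⟩
  have h3 : algebraMap ℂ[X] (RatFunc ℂ) f.num / algebraMap ℂ[X] (RatFunc ℂ) f.denom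
      = algebraMap ℂ[X] (RatFunc ℂ) P / algebraMap ℂ[X] (RatFunc ℂ) Q :=
    f.num_div_denom.trans hf
  rw [div_eq_div_iff (RatFunc.algebraMap_ne_zero f.denom_ne_zero)
    (RatFunc.algebraMap_ne_zero hQ0), ← map_mul, ← map_mul] at h3
  have hnum : f.num * Q = P * f.denom := by
    exact_mod_cast (RatFunc.algebraMap_injective ℂ) h3
  have hev : f.num.eval q₀ * Q.eval q₀ = P.eval q₀ * f.denom.eval q₀ := by
    have := congrArg (Polynomial.eval q₀) hnum
    simpa using this
  rw [RatFunc.eval]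
  have hid : ∀ g : ℂ[X], g.eval₂ (RingHom.id ℂ) q₀ = g.eval q₀ := fun g => rfl
  rw [hid, hid]
  field_simp
  linear_combination hev

theorem VOrd.conclude {q₀ : ℂ} {f : RatFunc ℂ} {d : ℤ} {v : ℂ} (hf : VOrd q₀ f d v)
    (hd : 0 ≤ d) :
    f.denom.eval q₀ ≠ 0 ∧ RatFunc.eval (RingHom.id ℂ) q₀ f = (if d = 0 then v else 0) := by
  obtain ⟨hv, P, Q, hQ, hP, hfe⟩ := hf
  lift d to ℕ using hd
  have htp : (tQ q₀) ^ (d : ℤ) * algebraMap ℂ[X] (RatFunc ℂ) P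
      = algebraMap ℂ[X] (RatFunc ℂ) ((X - C q₀) ^ d * P) := by
    rw [zpow_natCast, tQ_eq, map_mul, map_pow]
  rw [htp] at hfe
  obtain ⟨hden, hev⟩ := evalHelper q₀ f _ Q hQ hfe
  refine ⟨hden, ?_⟩
  rw [hev]
  rcases Nat.eq_zero_or_pos d with h0 | h0
  · subst h0
    simp only [pow_zero, one_mul, Nat.cast_zero, if_pos rfl, hP]
    field_simp
    simp
  · rw [if_neg (by exact_mod_cast h0.ne')]
    simp [Polynomial.eval_mul, Polynomial.eval_pow, sub_self, zero_pow h0.ne']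

theorem factor_lemma (q₀ : ℂ) (k : ℕ) (hk : q₀ ^ k = 1) :
    ∃ h : ℂ[X], (X ^ k - 1 : ℂ[X]) = (X - C q₀) * h ∧ h.eval q₀ = k * q₀ ^ (k - 1) := by
  have hroot : IsRoot (X ^ k - 1 : ℂ[X]) q₀ := by simp [IsRoot, hk]
  obtain ⟨h, hh⟩ := (dvd_iff_isRoot.mpr hroot)
  refine ⟨h, hh, ?_⟩
  have hder := congrArg derivative hh
  rw [derivative_sub, derivative_one, derivative_X_pow, sub_zero, derivative_mul,
    derivative_sub, derivative_X, derivative_C, sub_zero, one_mul] at hder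
  have := congrArg (Polynomial.eval q₀) hder
  simpa using this.symm

/-- The leading value of `[m]` at `q₀`. -/
def gZ (l : ℕ) (q₀ : ℂ) (m : ℤ) : ℂ :=
  if (l : ℤ) ∣ m then (m : ℂ) * q₀⁻¹ / (q₀ - 1) else (q₀ ^ m - 1) / (q₀ - 1)

end Aux

noncomputable section Aux2
open Polynomial

variable {l : ℕ} {q₀ : ℂ}

theorem VOrd_qintZ (hl : 2 ≤ l) (hprim : IsPrimitiveRoot q₀ l) (hq₀ : q₀ ≠ 1)
    (m : ℤ) (hm : m ≠ 0) :
    VOrd q₀ (qintZ m) (if (l : ℤ) ∣ m then 1 else 0) (gZ l q₀ m) := by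
  have hq0 : q₀ ≠ 0 := hprim.ne_zero (by omega)
  have hq1 : q₀ - 1 ≠ 0 := sub_ne_zero.mpr hq₀
  have hXne : (RatFunc.X - 1 : RatFunc ℂ) ≠ 0 := by
    have : (RatFunc.X - 1 : RatFunc ℂ) = algebraMap ℂ[X] (RatFunc ℂ) (X - 1) := by
      rw [map_sub, RatFunc.algebraMap_X, map_one]
    rw [this]
    exact RatFunc.algebraMap_ne_zero (fun h => by
      have := congrArg (Polynomial.eval (0:ℂ)) h; simp at this)
  have hpow : ∀ k : ℕ, (q₀ ^ k = 1 ↔ l ∣ k) := fun k => hprim.pow_eq_one_iff_dvd k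
  -- main work
  rcases lt_or_gt_of_ne hm with hneg | hpos
  · -- m negative
    obtain ⟨k, hk⟩ : ∃ k : ℕ, m = -(k : ℤ) := ⟨(-m).toNat, by omega⟩
    subst hk
    have hk1 : 1 ≤ k := by omega
    have hXRne : (RatFunc.X : RatFunc ℂ) ≠ 0 := RatFunc.X_ne_zero
    have hXone : (RatFunc.X - 1 : RatFunc ℂ) = algebraMap ℂ[X] (RatFunc ℂ) (X - 1) := by
      rw [map_sub, RatFunc.algebraMap_X, map_one]
    have hXpow : (RatFunc.X : RatFunc ℂ) ^ (-(k : ℤ)) = (RatFunc.X ^ k)⁻¹ := by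
      rw [zpow_neg, zpow_natCast]
    have hQeval : ((X : ℂ[X]) ^ k * (X - 1)).eval q₀ ≠ 0 := by
      simp only [Polynomial.eval_mul, Polynomial.eval_pow, Polynomial.eval_X,
        Polynomial.eval_sub, Polynomial.eval_one]
      exact mul_ne_zero (pow_ne_zero _ hq0) hq1
    have hXkalg : (RatFunc.X : RatFunc ℂ) ^ k = algebraMap ℂ[X] (RatFunc ℂ) (X ^ k) := by
      rw [map_pow, RatFunc.algebraMap_X]
    have key : algebraMap ℂ[X] (RatFunc ℂ) (X ^ k * (X - 1)) * qintZ (-(k : ℤ))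
        = algebraMap ℂ[X] (RatFunc ℂ) (1 - X ^ k) := by
      rw [qintZ, hXpow]
      simp only [map_mul, map_sub, map_pow, map_one, RatFunc.algebraMap_X]
      have hXkne : (RatFunc.X : RatFunc ℂ) ^ k ≠ 0 := pow_ne_zero _ hXRne
      field_simp
    by_cases hdvd : (l : ℤ) ∣ (-(k : ℤ))
    · have hdl : l ∣ k := Int.natCast_dvd_natCast.mp (dvd_neg.mp hdvd)
      have hq0m : q₀ ^ k = 1 := (hpow k).mpr hdl
      obtain ⟨h, hfac, hhe⟩ := factor_lemma q₀ k hq0m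
      have hqinv : q₀ ^ (k - 1) = q₀⁻¹ := by
        have h2 : q₀ ^ (k - 1) * q₀ = 1 := by
          rw [← pow_succ, Nat.sub_add_cancel hk1, hq0m]
        field_simp at h2 ⊢
        linear_combination h2
      rw [if_pos hdvd]
      refine ⟨?_, -h, X ^ k * (X - 1), hQeval, ?_, ?_⟩
      · rw [gZ, if_pos hdvd]
        have hmc : ((-(k:ℤ) : ℤ):ℂ) ≠ 0 := by
          exact_mod_cast (show -(k:ℤ) ≠ 0 by omega)
        exact div_ne_zero (mul_ne_zero hmc (inv_ne_zero hq0)) hq1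
      · rw [gZ, if_pos hdvd]
        simp only [Polynomial.eval_neg, hhe, hqinv, Polynomial.eval_mul,
          Polynomial.eval_pow, Polynomial.eval_X, Polynomial.eval_sub, Polynomial.eval_one,
          hq0m]
        push_cast
        field_simp
      · rw [key, zpow_one, tQ_eq, ← map_mul]
        congr 1
        linear_combination -hfac
    · rw [if_neg hdvd]
      have hdl : ¬ l ∣ k := fun h => hdvd (by exact_mod_cast (dvd_neg.mpr (Int.natCast_dvd_natCast.mpr h)))
      have hq0m : q₀ ^ k ≠ 1 := fun h => hdl ((hpow k).mp h)
      refine ⟨?_, 1 - X ^ k, X ^ k * (X - 1), hQeval, ?_, ?_⟩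
      · rw [gZ, if_neg hdvd]
        have : q₀ ^ (-(k:ℤ)) = (q₀ ^ k)⁻¹ := by rw [zpow_neg, zpow_natCast]
        rw [this]
        refine div_ne_zero ?_ hq1
        rw [sub_ne_zero]
        intro hcon
        apply hq0m
        rw [← inv_inv (q₀ ^ k), hcon, inv_one]
      · rw [gZ, if_neg hdvd]
        have hz : q₀ ^ (-(k:ℤ)) = (q₀ ^ k)⁻¹ := by rw [zpow_neg, zpow_natCast]
        simp only [Polynomial.eval_sub, Polynomial.eval_one, Polynomial.eval_mul,
          Polynomial.eval_pow, Polynomial.eval_X, hz]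
        have hqk : q₀ ^ k ≠ 0 := pow_ne_zero _ hq0
        field_simp
      · rw [key, zpow_zero, one_mul]
  · -- m positive
    lift m to ℕ using hpos.le
    have hk1 : 1 ≤ m := by exact_mod_cast hpos
    have hXpow : (RatFunc.X : RatFunc ℂ) ^ (m : ℤ) - 1
        = algebraMap ℂ[X] (RatFunc ℂ) (X ^ m - 1) := by
      rw [zpow_natCast, map_sub, map_pow, RatFunc.algebraMap_X, map_one]
    have hXone : (RatFunc.X - 1 : RatFunc ℂ) = algebraMap ℂ[X] (RatFunc ℂ) (X - 1) := by
      rw [map_sub, RatFunc.algebraMap_X, map_one]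
    have hQeval : (X - 1 : ℂ[X]).eval q₀ ≠ 0 := by simpa using hq1
    have key : algebraMap ℂ[X] (RatFunc ℂ) (X - 1) * qintZ (m : ℤ)
        = algebraMap ℂ[X] (RatFunc ℂ) (X ^ m - 1) := by
      rw [qintZ, hXpow, hXone, mul_div_cancel₀]
      rw [← hXone]; exact hXne
    by_cases hdvd : (l : ℤ) ∣ (m : ℤ)
    · have hdl : l ∣ m := by exact_mod_cast hdvd
      have hq0m : q₀ ^ m = 1 := (hpow m).mpr hdl
      obtain ⟨h, hfac, hhe⟩ := factor_lemma q₀ m hq0m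
      rw [if_pos hdvd]
      refine ⟨?_, h, X - 1, hQeval, ?_, ?_⟩
      · rw [gZ, if_pos hdvd]
        have hmc : ((m:ℤ):ℂ) ≠ 0 := by exact_mod_cast hm
        exact div_ne_zero (mul_ne_zero hmc (inv_ne_zero hq0)) hq1
      · rw [hhe, gZ, if_pos hdvd]
        have hqinv : q₀ ^ (m - 1) = q₀⁻¹ := by
          have : q₀ ^ (m - 1) * q₀ = 1 := by
            rw [← pow_succ, Nat.sub_add_cancel hk1, hq0m]
          field_simp at this ⊢
          linear_combination this
        rw [hqinv]
        simp only [Polynomial.eval_sub, Polynomial.eval_X, Polynomial.eval_one]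
        push_cast
        field_simp
      · rw [key, hfac, zpow_one, map_mul, tQ_eq]
    · rw [if_neg hdvd]
      have hq0m : q₀ ^ m ≠ 1 := fun h => hdvd (by exact_mod_cast (hpow m).mp h)
      refine ⟨?_, X ^ m - 1, X - 1, hQeval, ?_, ?_⟩
      · rw [gZ, if_neg hdvd]
        have : q₀ ^ (m : ℤ) = q₀ ^ m := zpow_natCast q₀ m
        rw [this]
        exact div_ne_zero (sub_ne_zero.mpr hq0m) hq1
      · rw [gZ, if_neg hdvd, zpow_natCast]
        simp only [Polynomial.eval_sub, Polynomial.eval_pow, Polynomial.eval_X,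
          Polynomial.eval_one]
        field_simp
      · rw [key, zpow_zero, one_mul]

end Aux2

noncomputable section Aux3
open Polynomial

/-- Value at `q₀` of `[j]`, natural-number version. -/
def gN (l : ℕ) (q₀ : ℂ) (j : ℕ) : ℂ :=
  if l ∣ j then (j : ℂ) * q₀⁻¹ / (q₀ - 1) else (q₀ ^ j - 1) / (q₀ - 1)

theorem gZ_natCast (l : ℕ) (q₀ : ℂ) (j : ℕ) : gZ l q₀ (j : ℤ) = gN l q₀ j := by
  rw [gZ, gN]
  by_cases h : l ∣ j
  · rw [if_pos (Int.natCast_dvd_natCast.mpr h), if_pos h]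
    norm_num
  · rw [if_neg (fun hh => h (Int.natCast_dvd_natCast.mp hh)), if_neg h, zpow_natCast]

/-- `∏_{r=1}^{l-1} (q₀^r - 1)`. -/
def WP (l : ℕ) (q₀ : ℂ) : ℂ := ∏ r ∈ Finset.range (l - 1), (q₀ ^ (r + 1) - 1)

/-- The value of one full block of `l` consecutive `q`-integers. -/
def BP (l : ℕ) (q₀ : ℂ) : ℂ := (l : ℂ) * q₀⁻¹ * WP l q₀ / (q₀ - 1) ^ l

/-- Value at `q₀` of `[N]!`. -/
def VF (l : ℕ) (q₀ : ℂ) (N : ℕ) : ℂ := ∏ k ∈ Finset.range N, gN l q₀ (k + 1)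

variable {l : ℕ} {q₀ : ℂ}

theorem VOrd_qintN (hl : 2 ≤ l) (hprim : IsPrimitiveRoot q₀ l) (hq₀ : q₀ ≠ 1)
    (j : ℕ) (hj : 1 ≤ j) :
    VOrd q₀ (qintZ (j : ℤ)) (if l ∣ j then 1 else 0) (gN l q₀ j) := by
  have h := VOrd_qintZ hl hprim hq₀ (j : ℤ) (by exact_mod_cast (by omega : j ≠ 0))
  rw [gZ_natCast] at h
  have hiff : (if l ∣ j then (1:ℤ) else 0) = (if (l:ℤ) ∣ (j:ℤ) then 1 else 0) := by
    simp [Int.natCast_dvd_natCast]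
  rw [hiff]
  exact h

theorem VOrd_qfact (hl : 2 ≤ l) (hprim : IsPrimitiveRoot q₀ l) (hq₀ : q₀ ≠ 1)
    (N : ℕ) : VOrd q₀ (qfactF N) ((N / l : ℕ) : ℤ) (VF l q₀ N) := by
  have h := VOrd.prod (q₀ := q₀) (s := Finset.range N)
    (f := fun k => qintZ ((k : ℤ) + 1))
    (d := fun k => if l ∣ (k + 1) then 1 else 0)
    (v := fun k => gN l q₀ (k + 1))
    (fun k _ => by
      have := VOrd_qintN hl hprim hq₀ (k + 1) (by omega)
      convert this using 2 <;> push_cast <;> ring)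
  have hsum : (∑ k ∈ Finset.range N, if l ∣ (k + 1) then (1 : ℤ) else 0)
      = ((N / l : ℕ) : ℤ) := by
    rw [Finset.sum_boole]
    exact_mod_cast Nat.card_multiples N l
  rw [hsum] at h
  exact h

theorem gN_mul_l (l : ℕ) (q₀ : ℂ) (v : ℕ) : gN l q₀ (l * v) = (l : ℂ) * v * q₀⁻¹ / (q₀ - 1) := by
  rw [gN, if_pos (dvd_mul_right l v)]
  push_cast
  ring_nf

set_option linter.unusedSectionVars false

section Values

variable (hl : 2 ≤ l) (hprim : IsPrimitiveRoot q₀ l) (hq₀ : q₀ ≠ 1)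
include hl hprim hq₀

theorem q0_ne_zero : q₀ ≠ 0 := hprim.ne_zero (by omega)

theorem q0_pow_l : q₀ ^ l = 1 := hprim.pow_eq_one

theorem q0_pow_ne_one {j : ℕ} (h1 : 1 ≤ j) (h2 : j < l) : q₀ ^ j ≠ 1 := by
  intro h
  have := (hprim.pow_eq_one_iff_dvd j).mp h
  have := Nat.le_of_dvd (by omega) this
  omega

theorem WP_ne_zero : WP l q₀ ≠ 0 := by
  rw [WP]
  apply Finset.prod_ne_zero_iff.mpr
  intro r hr
  rw [Finset.mem_range] at hr
  exact sub_ne_zero.mpr (q0_pow_ne_one hl hprim hq₀ (by omega) (by omega))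

theorem BP_ne_zero : BP l q₀ ≠ 0 := by
  rw [BP]
  have h1 : ((l : ℂ)) ≠ 0 := by exact_mod_cast (by omega : l ≠ 0)
  have h2 := q0_ne_zero hl hprim hq₀
  have h3 : q₀ - 1 ≠ 0 := sub_ne_zero.mpr hq₀
  exact div_ne_zero (mul_ne_zero (mul_ne_zero h1 (inv_ne_zero h2)) (WP_ne_zero hl hprim hq₀))
    (pow_ne_zero _ h3)

theorem gN_ne_zero (j : ℕ) (hj : 1 ≤ j) : gN l q₀ j ≠ 0 := by
  have h2 := q0_ne_zero hl hprim hq₀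
  have h3 : q₀ - 1 ≠ 0 := sub_ne_zero.mpr hq₀
  rw [gN]
  by_cases h : l ∣ j
  · rw [if_pos h]
    have : (j : ℂ) ≠ 0 := by exact_mod_cast (by omega : j ≠ 0)
    exact div_ne_zero (mul_ne_zero this (inv_ne_zero h2)) h3
  · rw [if_neg h]
    refine div_ne_zero (sub_ne_zero.mpr ?_) h3
    intro hcon
    exact h ((hprim.pow_eq_one_iff_dvd j).mp hcon)

theorem gN_not_dvd (u r : ℕ) (hr : r < l - 1) :
    gN l q₀ (l * u + r + 1) = (q₀ ^ (r + 1) - 1) / (q₀ - 1) := by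
  have hnd : ¬ l ∣ (l * u + r + 1) := by
    intro h
    have h2 : l ∣ (r + 1) := by
      have := (Nat.dvd_add_right (Dvd.intro u rfl)).mp (by rwa [add_assoc] at h)
      exact this
    have := Nat.le_of_dvd (by omega) h2
    omega
  rw [gN, if_neg hnd]
  congr 2
  rw [add_assoc, pow_add, pow_mul, q0_pow_l hl hprim hq₀, one_pow, one_mul]

theorem block_sub (u : ℕ) :
    ∏ r ∈ Finset.range (l - 1), gN l q₀ (l * u + r + 1) = WP l q₀ / (q₀ - 1) ^ (l - 1) := by
  rw [Finset.prod_congr rfl (fun r hr => gN_not_dvd hl hprim hq₀ u r (Finset.mem_range.mp hr))]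
  rw [Finset.prod_div_distrib, Finset.prod_const, Finset.card_range, WP]

theorem block_full (v : ℕ) :
    ∏ r ∈ Finset.range l, gN l q₀ (l * v + r + 1) = ((v : ℂ) + 1) * BP l q₀ := by
  have hrange : Finset.range l = Finset.range ((l - 1) + 1) := by
    rw [Nat.sub_add_cancel (by omega)]
  rw [hrange, Finset.prod_range_succ, block_sub hl hprim hq₀]
  have hidx : l * v + (l - 1) + 1 = l * (v + 1) := by
    have h1 : l * (v + 1) = l * v + l := by ring
    omega
  rw [hidx, gN_mul_l l q₀]
  have hpow : (q₀ - 1) ^ l = (q₀ - 1) ^ (l - 1) * (q₀ - 1) := by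
    rw [← pow_succ, Nat.sub_add_cancel (by omega)]
  rw [BP, hpow]
  have h3 : q₀ - 1 ≠ 0 := sub_ne_zero.mpr hq₀
  have h2 := q0_ne_zero hl hprim hq₀
  field_simp
  push_cast
  ring

theorem VF_mul (v : ℕ) : VF l q₀ (l * v) = (v.factorial : ℂ) * (BP l q₀) ^ v := by
  induction v with
  | zero => simp [VF]
  | succ v ih =>
    have : l * (v + 1) = l * v + l := by ring
    rw [this, VF, Finset.prod_range_add, ← VF]
    have hbl : ∏ r ∈ Finset.range l, gN l q₀ (l * v + r + 1) = ((v : ℂ) + 1) * BP l q₀ :=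
      block_full hl hprim hq₀ v
    rw [hbl, ih, Nat.factorial_succ]
    push_cast
    ring

theorem VF_pred (s : ℕ) (hs : 1 ≤ s) :
    VF l q₀ (l * s - 1) = VF l q₀ (l * (s - 1)) * (WP l q₀ / (q₀ - 1) ^ (l - 1)) := by
  have hidx : l * s - 1 = l * (s - 1) + (l - 1) := by
    have h1 : l * s = l * (s - 1) + l := by
      have h2 : s = (s - 1) + 1 := by omega
      rw [h2, Nat.mul_succ]
      congr 1 <;> omega
    omega
  rw [hidx, VF, Finset.prod_range_add, ← VF, block_sub hl hprim hq₀]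

theorem VF_ratio (b c : ℕ) (hb : 1 ≤ b) (hc : 1 ≤ c) :
    VF l q₀ (l * (b + c) - 1) / (VF l q₀ (l * c) * VF l q₀ (l * b - 1))
      = ((b + c - 1).choose c : ℂ) := by
  rw [VF_pred hl hprim hq₀ (b + c) (by omega), VF_pred hl hprim hq₀ b hb,
    VF_mul hl hprim hq₀, VF_mul hl hprim hq₀, VF_mul hl hprim hq₀]
  have hW' : WP l q₀ / (q₀ - 1) ^ (l - 1) ≠ 0 :=
    div_ne_zero (WP_ne_zero hl hprim hq₀) (pow_ne_zero _ (sub_ne_zero.mpr hq₀))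
  have hB := BP_ne_zero hl hprim hq₀
  have hfact : ∀ m : ℕ, ((m.factorial : ℂ)) ≠ 0 := fun m => by
    exact_mod_cast m.factorial_ne_zero
  have hkey : ((b + c - 1).choose c : ℂ) * (c.factorial : ℂ) * ((b - 1).factorial : ℂ)
      = ((b + c - 1).factorial : ℂ) := by
    have := Nat.choose_mul_factorial_mul_factorial (show c ≤ b + c - 1 by omega)
    have h2 : b + c - 1 - c = b - 1 := by omega
    rw [h2] at this
    exact_mod_cast this
  have hpow : (BP l q₀) ^ (b + c - 1) = (BP l q₀) ^ c * (BP l q₀) ^ (b - 1) := by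
    rw [← pow_add]
    congr 1
    omega
  rw [hpow]
  have hden : (c.factorial : ℂ) * (BP l q₀) ^ c *
      (((b - 1).factorial : ℂ) * (BP l q₀) ^ (b - 1) * (WP l q₀ / (q₀ - 1) ^ (l - 1))) ≠ 0 :=
    mul_ne_zero (mul_ne_zero (hfact c) (pow_ne_zero _ hB))
      (mul_ne_zero (mul_ne_zero (hfact (b - 1)) (pow_ne_zero _ hB)) hW')
  rw [div_eq_iff hden]
  linear_combination (-((BP l q₀) ^ c * (BP l q₀) ^ (b - 1) * (WP l q₀ / (q₀ - 1) ^ (l - 1)))) * hkey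

end Values

end Aux3

noncomputable section Aux4

theorem ndiv_pred {l : ℕ} (hl : 2 ≤ l) (s : ℕ) (hs : 1 ≤ s) : (l * s - 1) / l = s - 1 := by
  obtain ⟨t, rfl⟩ : ∃ t, s = t + 1 := ⟨s - 1, by omega⟩
  have h1 : l * (t + 1) - 1 = (l - 1) + t * l := by
    have h2 : l * (t + 1) = l * t + l := by ring
    have h3 : t * l = l * t := by ring
    omega
  rw [h1, Nat.add_mul_div_right _ _ (by omega : 0 < l), Nat.div_eq_of_lt (by omega)]
  omega

theorem ndiv_shift {l : ℕ} (hl : 2 ≤ l) (b K : ℕ) (hK : ¬ l ∣ K) :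
    (l * b + K - 1) / l = b + K / l := by
  obtain ⟨q, r, hqr, hr⟩ : ∃ q r, K = l * q + r ∧ r < l :=
    ⟨K / l, K % l, (Nat.div_add_mod K l).symm, Nat.mod_lt _ (by omega)⟩
  have hr1 : 1 ≤ r := by
    rcases Nat.eq_zero_or_pos r with h0 | h0
    · exact absurd ⟨q, by omega⟩ hK
    · exact h0
  have hKdiv : K / l = q := by
    rw [hqr, show l * q + r = r + q * l from by ring, Nat.add_mul_div_right _ _ (by omega : 0 < l),
      Nat.div_eq_of_lt hr]
    omega
  have h1 : l * b + K - 1 = (r - 1) + (b + q) * l := by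
    have h2 : (b + q) * l = l * b + l * q := by ring
    omega
  rw [h1, Nat.add_mul_div_right _ _ (by omega : 0 < l), Nat.div_eq_of_lt (by omega), hKdiv]
  omega

theorem qbinomZ_eq (M K : ℤ) (hK : 0 < K) (hKM : K ≤ M) :
    qbinomZ M K = qfactF M.toNat / (qfactF K.toNat * qfactF (M.toNat - K.toNat)) := by
  have hM : (0 : ℤ) < M := lt_of_lt_of_le hK hKM
  rw [qbinomZ, if_neg hK.ne', if_neg]
  · have : (M - K).toNat = M.toNat - K.toNat := by omega
    rw [this]
  · push_neg
    exact ⟨hK.le, le_max_of_le_right hKM⟩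

theorem VOrd_qbinom {l : ℕ} {q₀ : ℂ} (hl : 2 ≤ l) (hprim : IsPrimitiveRoot q₀ l)
    (hq₀ : q₀ ≠ 1) (M K : ℤ) (hK : 0 < K) (hKM : K ≤ M) :
    VOrd q₀ (qbinomZ M K)
      ((M.toNat / l : ℕ) - (((K.toNat / l : ℕ) : ℤ) + (((M.toNat - K.toNat) / l : ℕ) : ℤ)))
      (VF l q₀ M.toNat / (VF l q₀ K.toNat * VF l q₀ (M.toNat - K.toNat))) := by
  rw [qbinomZ_eq M K hK hKM]
  exact (VOrd_qfact hl hprim hq₀ M.toNat).div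
    ((VOrd_qfact hl hprim hq₀ K.toNat).mul (VOrd_qfact hl hprim hq₀ (M.toNat - K.toNat)))

end Aux4

/-- Let `q₀ ≠ 1` be a primitive `l`-th root of unity, `p` a positive integer, and
`a_1, …, a_p` integers with `a_1 > 0` and `a_1 + ⋯ + a_p = n = l·n'`. Then
`A = ([n]/[a_1])·F_q(a_1, …, a_p) ∈ ℂ(q)` is regular at `q₀` (the denominator of its
reduced form does not vanish at `q₀`), and its value at `q₀` is `0` if some `a_i` is not
divisible by `l`, and `(n'/a_1')·∏_{i=1}^{p-1} C(a_i' + a_{i+1}' - 1, a_{i+1}')` if all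
`a_i = l·a_i'` are divisible by `l`. -/
theorem eval_qint_ratio_mul_Fq_at_root_of_unity
    (l : ℕ) (q₀ : ℂ) (hq₀ : q₀ ≠ 1) (hprim : IsPrimitiveRoot q₀ l)
    (p : ℕ) (hp : 0 < p) (a : ℕ → ℤ) (ha : 0 < a 0)
    (n n' : ℤ) (hn : n = ∑ i ∈ Finset.range p, a i) (hn' : n = l * n') :
    let A : RatFunc ℂ := qintZ n / qintZ (a 0) * Fq p a
    A.denom.eval q₀ ≠ 0 ∧
      RatFunc.eval (RingHom.id ℂ) q₀ A =
        (if ∃ i, i < p ∧ ¬ (l : ℤ) ∣ a i then 0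
         else ((n' : ℂ) / (a 0 / l : ℤ)) *
           ∏ i ∈ Finset.range (p - 1),
             binomZ (a i / l + a (i + 1) / l - 1) (a (i + 1) / l)) := by
  intro A
  by_cases hn0 : n = 0
  · -- degenerate case: `[n] = 0`, so `A = 0`
    have hq : qintZ n = 0 := by
      rw [hn0, qintZ, zpow_zero, sub_self, zero_div]
    have hA : A = 0 := by
      show qintZ n / qintZ (a 0) * Fq p a = 0
      rw [hq, zero_div, zero_mul]
    rw [hA, RatFunc.denom_zero, RatFunc.eval_zero]
    refine ⟨by simp, ?_⟩
    by_cases hex : ∃ i, i < p ∧ ¬ (l : ℤ) ∣ a i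
    · rw [if_pos hex]
    · rw [if_neg hex]
      push_neg at hex
      have hl0 : l ≠ 0 := by
        intro h0
        have := hex 0 hp
        rw [h0] at this
        simp only [Nat.cast_zero, zero_dvd_iff] at this
        omega
      have hn'0 : n' = 0 := by
        have : (l : ℤ) ≠ 0 := by exact_mod_cast hl0
        rw [hn0] at hn'
        exact (mul_eq_zero.mp hn'.symm).resolve_left this
      rw [hn'0]
      simp
  · -- main case : `n ≠ 0`
    have hl2 : 2 ≤ l := by
      rcases Nat.lt_or_ge l 2 with h | h
      · interval_cases l
        · simp only [Nat.cast_zero, zero_mul] at hn'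
          exact absurd hn' hn0
        · exact absurd (by simpa using hprim.pow_eq_one) hq₀
      · exact h
    have hdvdn : (l : ℤ) ∣ n := ⟨n', hn'⟩
    by_cases hdeg : ∃ i, i < p - 1 ∧ a (i + 1) ≠ 0 ∧
        (a (i + 1) < 0 ∨ a (i + 1) > max 0 (a i + a (i + 1) - 1))
    · -- some `q`-binomial factor is identically zero
      obtain ⟨i, hip, hne, hcond⟩ := hdeg
      have hfac0 : qbinomZ (a i + a (i + 1) - 1) (a (i + 1)) = 0 := by
        rw [qbinomZ, if_neg hne, if_pos hcond]
      have hFq : Fq p a = 0 := by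
        rw [Fq]
        exact Finset.prod_eq_zero (Finset.mem_range.mpr hip) hfac0
      have hA : A = 0 := by
        show qintZ n / qintZ (a 0) * Fq p a = 0
        rw [hFq, mul_zero]
      rw [hA, RatFunc.denom_zero, RatFunc.eval_zero]
      refine ⟨by simp, ?_⟩
      by_cases hex : ∃ i, i < p ∧ ¬ (l : ℤ) ∣ a i
      · rw [if_pos hex]
      · rw [if_neg hex]
        push_neg at hex
        have hlz : (0:ℤ) < (l:ℤ) := by exact_mod_cast (by omega : 0 < l)
        have hip' : i + 1 < p := by omega
        obtain ⟨c, hc⟩ := hex (i + 1) hip'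
        obtain ⟨b, hb⟩ := hex i (by omega)
        have hdivc : a (i + 1) / (l:ℤ) = c := by
          rw [hc, Int.mul_ediv_cancel_left _ hlz.ne']
        have hdivb : a i / (l:ℤ) = b := by
          rw [hb, Int.mul_ediv_cancel_left _ hlz.ne']
        have hbin0 : binomZ (a i / l + a (i + 1) / l - 1) (a (i + 1) / l) = 0 := by
          rw [hdivc, hdivb, binomZ, if_neg, if_pos]
          · rcases hcond with h1 | h1
            · left
              by_contra hcon
              push_neg at hcon
              have h2 : (0:ℤ) ≤ (l:ℤ) * c := mul_nonneg hlz.le hcon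
              linarith [hc ▸ h1]
            · right
              rw [gt_iff_lt, max_lt_iff]
              rw [gt_iff_lt, max_lt_iff] at h1
              obtain ⟨h2, h3⟩ := h1
              have hc0 : 0 < c := by
                by_contra hcon
                push_neg at hcon
                have h4 : (l:ℤ) * c ≤ 0 := mul_nonpos_iff.mpr (Or.inl ⟨hlz.le, hcon⟩)
                rw [hc] at h2
                linarith
              have hb0 : b ≤ 0 := by
                by_contra hcon
                push_neg at hcon
                have h4 : (l:ℤ) * 1 ≤ (l:ℤ) * b :=
                  mul_le_mul_of_nonneg_left hcon hlz.le
                rw [hb] at h3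
                rw [hc] at h3
                linarith
              exact ⟨hc0, by linarith⟩
          · intro h0
            rw [h0, mul_zero] at hc
            exact hne hc
        rw [Finset.prod_eq_zero (Finset.mem_range.mpr hip) hbin0, mul_zero]
    · -- all factors are honest Gaussian binomials
      push_neg at hdeg
      have hgood : ∀ i, i < p - 1 → a (i + 1) ≠ 0 →
          0 < a (i + 1) ∧ a (i + 1) ≤ a i + a (i + 1) - 1 := by
        intro i hi hne
        have h := hdeg i hi hne
        obtain ⟨h1, h2⟩ := h
        have hpos : 0 < a (i + 1) := lt_of_le_of_ne h1 (Ne.symm hne)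
        refine ⟨hpos, ?_⟩
        rcases max_cases (0 : ℤ) (a i + a (i + 1) - 1) with ⟨he, _⟩ | ⟨he, _⟩
        · rw [he] at h2; omega
        · rw [he] at h2; exact h2
      set DD : ℕ → ℤ := fun i => if a (i + 1) = 0 then 0 else
        (((a i + a (i + 1) - 1).toNat / l : ℕ) : ℤ) -
          ((((a (i + 1)).toNat / l : ℕ) : ℤ) +
            ((((a i + a (i + 1) - 1).toNat - (a (i + 1)).toNat) / l : ℕ) : ℤ)) with hDDdef
      set VV : ℕ → ℂ := fun i => if a (i + 1) = 0 then 1 else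
        VF l q₀ (a i + a (i + 1) - 1).toNat /
          (VF l q₀ (a (i + 1)).toNat *
            VF l q₀ ((a i + a (i + 1) - 1).toNat - (a (i + 1)).toNat)) with hVVdef
      have hOrdFac : ∀ i ∈ Finset.range (p - 1),
          VOrd q₀ (qbinomZ (a i + a (i + 1) - 1) (a (i + 1))) (DD i) (VV i) := by
        intro i hi
        rw [Finset.mem_range] at hi
        by_cases h0 : a (i + 1) = 0
        · rw [hDDdef, hVVdef]
          simp only [if_pos h0]
          rw [qbinomZ, if_pos h0]
          exact VOrd.one q₀
        · obtain ⟨hpos, hle⟩ := hgood i hi h0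
          rw [hDDdef, hVVdef]
          simp only [if_neg h0]
          exact VOrd_qbinom hl2 hprim hq₀ _ _ hpos hle
      have hOrdA : VOrd q₀ (qintZ n / qintZ (a 0) * Fq p a)
          ((1 - (if (l : ℤ) ∣ a 0 then 1 else 0)) + ∑ i ∈ Finset.range (p - 1), DD i)
          ((gZ l q₀ n / gZ l q₀ (a 0)) * ∏ i ∈ Finset.range (p - 1), VV i) := by
        have h1 := VOrd_qintZ hl2 hprim hq₀ n hn0
        rw [if_pos hdvdn] at h1
        have h2 := VOrd_qintZ hl2 hprim hq₀ (a 0) ha.ne'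
        have h3 := (h1.div h2).mul (VOrd.prod hOrdFac)
        rw [Fq]
        exact h3
      have hDnn : ∀ i ∈ Finset.range (p - 1), 0 ≤ DD i := by
        intro i hi
        rw [Finset.mem_range] at hi
        by_cases h0 : a (i + 1) = 0
        · rw [hDDdef]; simp [h0]
        · obtain ⟨hpos, hle⟩ := hgood i hi h0
          rw [hDDdef]
          simp only [if_neg h0]
          have hKM : (a (i + 1)).toNat ≤ (a i + a (i + 1) - 1).toNat := by omega
          have hdd := Nat.add_div_le_add_div (a (i + 1)).toNat
            ((a i + a (i + 1) - 1).toNat - (a (i + 1)).toNat) l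
          rw [Nat.add_sub_cancel' hKM] at hdd
          omega
      by_cases hex : ∃ i, i < p ∧ ¬ (l : ℤ) ∣ a i
      · -- value is zero : the order is at least 1
        have hSnn : 0 ≤ ∑ i ∈ Finset.range (p - 1), DD i := Finset.sum_nonneg hDnn
        have hd1 : 1 ≤ (1 - (if (l : ℤ) ∣ a 0 then 1 else 0)) +
            ∑ i ∈ Finset.range (p - 1), DD i := by
          by_cases hd0 : (l : ℤ) ∣ a 0
          · rw [if_pos hd0]
            have hSone : 1 ≤ ∑ i ∈ Finset.range (p - 1), DD i := by
              classical
              have hPp : ∃ j, j < p ∧ ¬ (l : ℤ) ∣ a j := hex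
              obtain ⟨hjp, hjnd⟩ := Nat.find_spec hPp
              set j := Nat.find hPp with hjdef
              have hj1 : 1 ≤ j := by
                rcases Nat.eq_zero_or_pos j with h0 | h0
                · exfalso
                  rw [h0] at hjnd
                  exact hjnd hd0
                · exact h0
              have hjm : (l : ℤ) ∣ a (j - 1) := by
                have hmin := Nat.find_min hPp (show j - 1 < j by omega)
                by_contra hcon
                exact hmin ⟨by omega, hcon⟩
              have hi0 : j - 1 < p - 1 := by omega
              have hidx : j - 1 + 1 = j := by omega
              have hjne : a j ≠ 0 := fun h => hjnd (h ▸ dvd_zero _)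
              obtain ⟨hpos, hle⟩ := hgood (j - 1) hi0 (by rw [hidx]; exact hjne)
              rw [hidx] at hpos hle
              obtain ⟨b, hb⟩ := hjm
              have hlz : (0 : ℤ) < (l : ℤ) := by exact_mod_cast (by omega : 0 < l)
              have hai1 : 1 ≤ a (j - 1) := by omega
              have hb1 : 1 ≤ b := by
                by_contra hcon
                push_neg at hcon
                have : (l : ℤ) * b ≤ 0 := mul_nonpos_iff.mpr (Or.inl ⟨hlz.le, by omega⟩)
                omega
              set bN := b.toNat with hbNdef
              set KN := (a j).toNat with hKNdef
              have hKNa : (KN : ℤ) = a j := Int.toNat_of_nonneg hpos.le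
              have hbNb : (bN : ℤ) = b := Int.toNat_of_nonneg (by omega)
              have hxc : ((l * bN : ℕ) : ℤ) = a (j - 1) := by
                push_cast
                rw [hbNb, ← hb]
              have hbN1 : 1 ≤ bN := by omega
              have hlbN1 : 1 ≤ l * bN := Nat.one_le_iff_ne_zero.mpr
                (Nat.mul_ne_zero (by omega) (by omega))
              have hKNnd : ¬ l ∣ KN := by
                intro hcon
                apply hjnd
                rw [← hKNa]
                exact_mod_cast Int.natCast_dvd_natCast.mpr hcon
              have hDj : DD (j - 1) = 1 := by
                rw [hDDdef]
                simp only [hidx, if_neg hjne]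
                rw [← hKNdef]
                have hMN : (a (j - 1) + a j - 1).toNat = l * bN + KN - 1 := by omega
                have hdiffN : (a (j - 1) + a j - 1).toNat - KN = l * bN - 1 := by
                  omega
                rw [hdiffN, hMN, ndiv_shift hl2 bN KN hKNnd, ndiv_pred hl2 bN hbN1]
                omega
              calc (1 : ℤ) = DD (j - 1) := hDj.symm
                _ ≤ ∑ i ∈ Finset.range (p - 1), DD i :=
                    Finset.single_le_sum hDnn (Finset.mem_range.mpr hi0)
            omega
          · rw [if_neg hd0]
            omega
        have hconc := hOrdA.conclude (by omega)
        rw [if_neg (by omega : ¬ ((1 - (if (l : ℤ) ∣ a 0 then 1 else 0)) +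
            ∑ i ∈ Finset.range (p - 1), DD i = 0))] at hconc
        exact ⟨hconc.1, by rw [hconc.2, if_pos hex]⟩
      · -- all `a i` divisible by `l` : nonzero value
        push_neg at hex
        have hd0 : (l : ℤ) ∣ a 0 := hex 0 hp
        have hlz : (0 : ℤ) < (l : ℤ) := by exact_mod_cast (by omega : 0 < l)
        have hBoth : ∀ i ∈ Finset.range (p - 1), DD i = 0 ∧
            VV i = binomZ (a i / l + a (i + 1) / l - 1) (a (i + 1) / l) := by
          intro i hi
          rw [Finset.mem_range] at hi
          by_cases h0 : a (i + 1) = 0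
          · refine ⟨by rw [hDDdef]; simp [h0], ?_⟩
            rw [hVVdef]
            simp only [if_pos h0]
            rw [h0, Int.zero_ediv, binomZ, if_pos rfl]
          · obtain ⟨hpos, hle⟩ := hgood i hi h0
            obtain ⟨c, hc⟩ := hex (i + 1) (by omega)
            obtain ⟨b, hb⟩ := hex i (by omega)
            have hc1 : 1 ≤ c := by
              by_contra hcon
              push_neg at hcon
              have : (l : ℤ) * c ≤ 0 := mul_nonpos_iff.mpr (Or.inl ⟨hlz.le, by omega⟩)
              omega
            have hb1 : 1 ≤ b := by
              by_contra hcon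
              push_neg at hcon
              have : (l : ℤ) * b ≤ 0 := mul_nonpos_iff.mpr (Or.inl ⟨hlz.le, by omega⟩)
              omega
            set bN := b.toNat with hbNdef
            set cN := c.toNat with hcNdef
            have hbNb : (bN : ℤ) = b := Int.toNat_of_nonneg (by omega)
            have hcNc : (cN : ℤ) = c := Int.toNat_of_nonneg (by omega)
            have hbN1 : 1 ≤ bN := by omega
            have hcN1 : 1 ≤ cN := by omega
            have hxb : ((l * bN : ℕ) : ℤ) = a i := by
              push_cast
              rw [hbNb, ← hb]
            have hxc : ((l * cN : ℕ) : ℤ) = a (i + 1) := by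
              push_cast
              rw [hcNc, ← hc]
            have hxbc : ((l * (bN + cN) : ℕ) : ℤ) = a i + a (i + 1) := by
              push_cast
              rw [hbNb, hcNc, hb, hc]
              ring
            have hlbN1 : 1 ≤ l * bN := Nat.one_le_iff_ne_zero.mpr
              (Nat.mul_ne_zero (by omega) (by omega))
            have hlbcN1 : 1 ≤ l * (bN + cN) := Nat.one_le_iff_ne_zero.mpr
              (Nat.mul_ne_zero (by omega) (by omega))
            have hMN : (a i + a (i + 1) - 1).toNat = l * (bN + cN) - 1 := by omega
            have hKN : (a (i + 1)).toNat = l * cN := by omega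
            have hdiffN : (a i + a (i + 1) - 1).toNat - (a (i + 1)).toNat = l * bN - 1 := by
              omega
            have hdivb : a i / (l : ℤ) = b := by rw [hb, Int.mul_ediv_cancel_left _ hlz.ne']
            have hdivc : a (i + 1) / (l : ℤ) = c := by
              rw [hc, Int.mul_ediv_cancel_left _ hlz.ne']
            constructor
            · rw [hDDdef]
              simp only [if_neg h0]
              rw [hdiffN, hMN, hKN, ndiv_pred hl2 (bN + cN) (by omega),
                ndiv_pred hl2 bN hbN1, Nat.mul_div_cancel_left cN (by omega : 0 < l)]
              omega
            · rw [hVVdef]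
              simp only [if_neg h0]
              rw [hdiffN, hMN, hKN, VF_ratio hl2 hprim hq₀ bN cN hbN1 hcN1]
              rw [hdivb, hdivc, binomZ, if_neg (by omega : ¬ c = 0), if_neg]
              · rw [show (b + c - 1).toNat = bN + cN - 1 from by omega, ← hcNdef]
              · push_neg
                refine ⟨by omega, ?_⟩
                have : 0 < b + c - 1 := by omega
                rw [max_eq_right this.le]
                omega
        have hDD0 : ∀ i ∈ Finset.range (p - 1), DD i = 0 := fun i hi => (hBoth i hi).1
        have hsum0 : ∑ i ∈ Finset.range (p - 1), DD i = 0 := Finset.sum_eq_zero hDD0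
        have hord0 : (1 - (if (l : ℤ) ∣ a 0 then 1 else 0)) +
            ∑ i ∈ Finset.range (p - 1), DD i = 0 := by
          rw [if_pos hd0, hsum0]
          ring
        have hconc := hOrdA.conclude (le_of_eq hord0.symm)
        rw [if_pos hord0] at hconc
        refine ⟨hconc.1, ?_⟩
        rw [hconc.2, if_neg (by push_neg; exact hex)]
        -- compute the value
        have hq0ne : q₀ ≠ 0 := q0_ne_zero hl2 hprim hq₀
        have hq1ne : q₀ - 1 ≠ 0 := sub_ne_zero.mpr hq₀
        obtain ⟨b0, hb0⟩ := id hd0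
        have hb01 : 1 ≤ b0 := by
          by_contra hcon
          push_neg at hcon
          have : (l : ℤ) * b0 ≤ 0 := mul_nonpos_iff.mpr (Or.inl ⟨hlz.le, by omega⟩)
          omega
        have hdiv0 : a 0 / (l : ℤ) = b0 := by rw [hb0, Int.mul_ediv_cancel_left _ hlz.ne']
        have hgZn : gZ l q₀ n = (n : ℂ) * q₀⁻¹ / (q₀ - 1) := by rw [gZ, if_pos hdvdn]
        have hgZ0 : gZ l q₀ (a 0) = ((a 0 : ℤ) : ℂ) * q₀⁻¹ / (q₀ - 1) := by
          rw [gZ, if_pos hd0]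
        have ha0ne : ((a 0 : ℤ) : ℂ) ≠ 0 := by exact_mod_cast ha.ne'
        have hb0ne : ((b0 : ℤ) : ℂ) ≠ 0 := by exact_mod_cast (by omega : b0 ≠ 0)
        have hlne : ((l : ℕ) : ℂ) ≠ 0 := by exact_mod_cast (by omega : l ≠ 0)
        have hratio : gZ l q₀ n / gZ l q₀ (a 0) = (n' : ℂ) / ((a 0 / (l : ℤ) : ℤ) : ℂ) := by
          rw [hgZn, hgZ0, hdiv0]
          have hncast : ((n : ℤ) : ℂ) = (l : ℂ) * (n' : ℂ) := by
            rw [hn']; push_cast; ring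
          have hacast : ((a 0 : ℤ) : ℂ) = (l : ℂ) * ((b0 : ℤ) : ℂ) := by
            rw [hb0]; push_cast; ring
          rw [hncast, hacast]
          field_simp
        rw [hratio]
        congr 1
        exact Finset.prod_congr rfl (fun i hi => (hBoth i hi).2)
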